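/- Let E be a strictly convex and reflexive Banach space, C a nonempty closed convex subset of E, and S a semigroup represented by self-maps T_s : C → C satisfying T_{st} = T_s ∘ T_t. If there exists a common attractive point a ∈ E for the representation (i.e. ‖a − T_s x‖ ≤ ‖a − x‖ for all s ∈ S and x ∈ C), then the representation has a common fixed point: there exists u ∈ C with T_s u = u for all s ∈ S. -/

import Mathlib

open NormedSpace Metric

set_option maxHeartbeats 1600000 in
theorem stmt3 {E : Type*} [NormedAddCommGroup E] [NormedSpace ℝ E] [CompleteSpace E]
    [StrictConvexSpace ℝ E]
    (hrefl : Function.Surjective (NormedSpace.inclusionInDoubleDual ℝ E))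
    (C : Set E) (hne : C.Nonempty) (hclosed : IsClosed C) (hconv : Convex ℝ C)
    (S : Type*) [Semigroup S] (T : S → E → E)
    (hmaps : ∀ s, ∀ x ∈ C, T s x ∈ C)
    (hrep : ∀ s t, ∀ x ∈ C, T (s * t) x = T s (T t x))
    (a : E) (hatt : ∀ s, ∀ x ∈ C, ‖a - T s x‖ ≤ ‖a - x‖) :
    ∃ u ∈ C, ∀ s, T s u = u := by
  classical
  let J : E →ₗᵢ[ℝ] StrongDual ℝ (StrongDual ℝ E) :=
    NormedSpace.inclusionInDoubleDualLi (𝕜 := ℝ) (E := E)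
  set d := Metric.infDist a C with hd
  have hdnn : 0 ≤ d := Metric.infDist_nonneg
  -- the image of C in the weak-star double dual
  set JC : Set (WeakDual ℝ (StrongDual ℝ E)) := {φ : WeakDual ℝ (StrongDual ℝ E) | ∃ x ∈ C, J x = (φ : StrongDual ℝ (StrongDual ℝ E))}
    with hJC
  have hJC_closed : IsClosed JC := by
    rw [← isOpen_compl_iff, isOpen_iff_mem_nhds]
    intro φ hφ
    obtain ⟨x, hx⟩ := hrefl (φ : StrongDual ℝ (StrongDual ℝ E))
    have hxC : x ∉ C := by
      intro h
      exact hφ ⟨x, h, hx⟩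
    
    obtain ⟨f, c, hfc, hcx⟩ := geometric_hahn_banach_closed_point hconv hclosed hxC
    have hopen : IsOpen {ψ : WeakDual ℝ (StrongDual ℝ E) | c < ψ f} :=
      isOpen_Ioi.preimage (WeakDual.eval_continuous f)
    have hmem : φ ∈ {ψ : WeakDual ℝ (StrongDual ℝ E) | c < ψ f} := by
      have : (φ : StrongDual ℝ (StrongDual ℝ E)) f = f x := by rw [← hx]; rfl
      show c < (φ : StrongDual ℝ (StrongDual ℝ E)) f
      rw [this]; exact hcx
    refine Filter.mem_of_superset (hopen.mem_nhds hmem) ?_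
    rintro ψ hψ ⟨y, hy, hyψ⟩
    have : (ψ : StrongDual ℝ (StrongDual ℝ E)) f = f y := by rw [← hyψ]; rfl
    have h1 : c < (ψ : StrongDual ℝ (StrongDual ℝ E)) f := hψ
    rw [this] at h1
    exact absurd (hfc y hy) (not_lt.2 h1.le)
  -- decreasing family of nonempty compact sets
  set K : ℕ → Set (WeakDual ℝ (StrongDual ℝ E)) := fun n =>
    JC ∩ WeakDual.toStrongDual ⁻¹' Metric.closedBall (J a) (d + 1 / (n + 1)) with hK
  have hKsub : ∀ n, K (n + 1) ⊆ K n := by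
    intro n ψ hψ
    refine ⟨hψ.1, ?_⟩
    have h2 := hψ.2
    simp only [Set.mem_preimage, Metric.mem_closedBall] at h2 ⊢
    refine h2.trans (add_le_add_right ?_ d)
    apply one_div_le_one_div_of_le
    · positivity
    · push_cast; linarith
  have hKne : ∀ n, (K n).Nonempty := by
    intro n
    have hpos : (0 : ℝ) < 1 / ((n : ℝ) + 1) := by positivity
    have : Metric.infDist a C < d + 1 / (n + 1) := by rw [← hd]; linarith
    obtain ⟨x, hxC, hxd⟩ := (Metric.infDist_lt_iff hne).1 this
    refine ⟨WeakDual.toStrongDual.symm (J x), ⟨x, hxC, rfl⟩, ?_⟩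
    simp only [Set.mem_preimage, Metric.mem_closedBall]
    show dist ((J x : StrongDual ℝ (StrongDual ℝ E))) (J a) ≤ d + 1 / (n + 1)
    rw [J.dist_map]
    rw [dist_comm]
    exact hxd.le
  have hKclosed : ∀ n, IsClosed (K n) := by
    intro n
    exact hJC_closed.inter (WeakDual.isCompact_closedBall (𝕜 := ℝ) (J a) _).isClosed
  have hK0 : IsCompact (K 0) :=
    (WeakDual.isCompact_closedBall (𝕜 := ℝ) (J a) (d + 1 / ((0:ℕ) + 1))).of_isClosed_subset (hKclosed 0)
      Set.inter_subset_right
  obtain ⟨φ, hφ⟩ := IsCompact.nonempty_iInter_of_sequence_nonempty_isCompact_isClosed K hKsub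
    hKne hK0 hKclosed
  simp only [Set.mem_iInter] at hφ
  obtain ⟨u, huC, huφ⟩ := (hφ 0).1
  -- u attains the infimum distance
  have hdist_le : ∀ n : ℕ, dist u a ≤ d + 1 / (n + 1) := by
    intro n
    have h2 := (hφ n).2
    simp only [Set.mem_preimage, Metric.mem_closedBall] at h2
    have : dist ((J u : StrongDual ℝ (StrongDual ℝ E))) (J a) ≤ d + 1 / (n + 1) := by
      rw [huφ]; exact h2
    rwa [J.dist_map] at this
  have hle : dist u a ≤ d := by
    refine le_of_forall_pos_le_add fun ε hε => ?_
    obtain ⟨n, hn⟩ := exists_nat_one_div_lt hε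
    exact (hdist_le n).trans (by linarith)
  have hge : d ≤ dist u a := by
    rw [dist_comm]; exact Metric.infDist_le_dist_of_mem huC
  have hueq : ‖a - u‖ = d := by
    rw [← dist_eq_norm, dist_comm]; exact le_antisymm hle hge
  -- uniqueness of the nearest point, by strict convexity
  have key : ∀ v ∈ C, ‖a - v‖ = d → v = u := by
    intro v hvC hveq
    by_contra hvu
    have hm : midpoint ℝ u v ∈ C := hconv.segment_subset huC hvC (midpoint_mem_segment u v)
    have hmd : d ≤ ‖a - midpoint ℝ u v‖ := by
      rw [← dist_eq_norm]
      exact Metric.infDist_le_dist_of_mem hm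
    have hsum : (a - u) + (a - v) = (2 : ℝ) • (a - midpoint ℝ u v) := by
      rw [midpoint_eq_smul_add, invOf_eq_inv]
      module
    have hnorm : ‖(a - u) + (a - v)‖ = 2 * ‖a - midpoint ℝ u v‖ := by
      rw [hsum, norm_smul]
      simp [Real.norm_ofNat]
    have h2d : ‖(a - u) + (a - v)‖ = ‖a - u‖ + ‖a - v‖ := by
      have hle' : ‖(a - u) + (a - v)‖ ≤ ‖a - u‖ + ‖a - v‖ := norm_add_le _ _
      have hge' : ‖a - u‖ + ‖a - v‖ ≤ ‖(a - u) + (a - v)‖ := by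
        rw [hueq, hveq, hnorm]; linarith
      linarith
    have := eq_of_norm_eq_of_norm_add_eq (by rw [hueq, hveq]) h2d
    exact hvu (sub_right_injective this).symm
  refine ⟨u, huC, fun s => ?_⟩
  have hTsC : T s u ∈ C := hmaps s u huC
  have h1 : ‖a - T s u‖ ≤ d := by rw [← hueq]; exact hatt s u huC
  have h2 : d ≤ ‖a - T s u‖ := by
    rw [← dist_eq_norm]
    exact Metric.infDist_le_dist_of_mem hTsC
  exact key _ hTsC (le_antisymm h1 h2)
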